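/- For every q ≥ 2 and L ≥ 2 there exists a finite set Ω_L of probability distributions on [L] such that for every n ≥ 1 and all x_1,...,x_L ∈ (∂Δ)^n, rad(x_1,...,x_L) = max_{ω∈Ω_L} rad_ω(x_1,...,x_L). -/

import Mathlib

open Finset

/-- A probability distribution on a finite type. -/
def IsDist {α : Type*} [Fintype α] (P : α → ℝ) : Prop :=
  (∀ a, 0 ≤ P a) ∧ ∑ a, P a = 1

/-- The embedding `φ : [q] → ∂Δ` sending `x` to the standard basis vector `e_x`. -/
noncomputable def phi (q : ℕ) (x : Fin q) : Fin q → ℝ := fun k => if k = x then 1 else 0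

/-- `d(x,y) = (1/2) ∑_j ‖x(j) − y(j)‖₁` for blocks in `ℝ^q`. -/
noncomputable def dvec {q n : ℕ} (x y : Fin n → Fin q → ℝ) : ℝ :=
  (1 / 2) * ∑ j, ∑ k, |x j k - y j k|

/-- The relaxed Chebyshev radius `rad(x₁,…,x_L) = (1/n) inf_{y∈Δⁿ} max_i d(xᵢ,y)`. -/
noncomputable def radRelax {q n L : ℕ} (xs : Fin L → Fin n → Fin q → ℝ) : ℝ :=
  (1 / (n : ℝ)) *
    sInf {r : ℝ | ∃ y : Fin n → Fin q → ℝ, (∀ j, IsDist (y j)) ∧ r = ⨆ i, dvec (xs i) y}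

/-- The weighted average radius `rad_ω(x₁,…,x_L) = (1/n) inf_{y∈Δⁿ} ∑_i ω(i) d(xᵢ,y)`. -/
noncomputable def radOmega {q n L : ℕ} (ω : Fin L → ℝ) (xs : Fin L → Fin n → Fin q → ℝ) : ℝ :=
  (1 / (n : ℝ)) *
    sInf {r : ℝ | ∃ y : Fin n → Fin q → ℝ, (∀ j, IsDist (y j)) ∧ r = ∑ i, ω i * dvec (xs i) y}

def lfun {L : ℕ} (p : Finset (Fin L) × Finset (Fin L)) (ω : Fin L → ℝ) : ℝ :=
  ∑ i ∈ p.1, ω i - ∑ i ∈ p.2, ω i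

lemma lfun_add_smul {L : ℕ} (p : Finset (Fin L) × Finset (Fin L)) (a b : Fin L → ℝ) (t : ℝ) :
    lfun p (a + t • b) = lfun p a + t * lfun p b := by
  simp only [lfun, Pi.add_apply, Pi.smul_apply, smul_eq_mul, Finset.sum_add_distrib,
    mul_sub, Finset.mul_sum]
  ring

lemma lfun_sub {L : ℕ} (p : Finset (Fin L) × Finset (Fin L)) (a b : Fin L → ℝ) :
    lfun p (a - b) = lfun p a - lfun p b := by
  simp only [lfun, Pi.sub_apply, Finset.sum_sub_distrib]
  ring

lemma lfun_coord {L : ℕ} (i : Fin L) (x : Fin L → ℝ) :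
    lfun ({i}, (∅ : Finset (Fin L))) x = x i := by
  simp [lfun]

def SolSet {L : ℕ} (T : Finset (Finset (Fin L) × Finset (Fin L))) : Set (Fin L → ℝ) :=
  {ω | ∑ i, ω i = 1 ∧ ∀ p ∈ T, lfun p ω = 0}

noncomputable def pick {L : ℕ} (T : Finset (Finset (Fin L) × Finset (Fin L))) : Fin L → ℝ :=
  letI := Classical.propDecidable (∃ ω, SolSet T = {ω})
  if h : ∃ ω, SolSet T = {ω} then h.choose else 0

noncomputable def Omeg (L : ℕ) : Finset (Fin L → ℝ) :=
  letI := Classical.decEq (Fin L → ℝ)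
  letI := Classical.decPred (IsDist (α := Fin L))
  (Finset.univ.powerset.image pick).filter IsDist

lemma mem_Omeg {L : ℕ} {ω : Fin L → ℝ} :
    ω ∈ Omeg L ↔ (∃ T, pick T = ω) ∧ IsDist ω := by
  classical
  simp [Omeg, Finset.mem_filter, Finset.mem_image]

lemma isDist_phi {q : ℕ} (x : Fin q) : IsDist (phi q x) := by
  constructor
  · intro k; unfold phi; split <;> norm_num
  · simp [phi]

set_option maxHeartbeats 2000000 in
/-- `rad` is achieved as the maximum of `rad_ω` over a finite set of weightings `Ω_L`. -/
theorem radRelax_achieved_by_finitely_many_omega (q L : ℕ) (hq : 2 ≤ q) (hL : 2 ≤ L) :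
    ∃ Ω : Finset (Fin L → ℝ), (∀ ω ∈ Ω, IsDist ω) ∧
      ∀ n : ℕ, 1 ≤ n → ∀ xs : Fin L → Fin n → Fin q → ℝ,
        (∀ i j, ∃ x : Fin q, xs i j = phi q x) →
        IsGreatest {r : ℝ | ∃ ω ∈ Ω, r = radOmega ω xs} (radRelax xs) := by
  classical
  haveI hqne : Nonempty (Fin q) := ⟨⟨0, by omega⟩⟩
  haveI hLne : Nonempty (Fin L) := ⟨⟨0, by omega⟩⟩
  have hqn : (Finset.univ : Finset (Fin q)).Nonempty := Finset.univ_nonempty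
  refine ⟨Omeg L, fun ω hω => (mem_Omeg.mp hω).2, ?_⟩
  intro n hn xs hxs
  choose k hk using hxs
  -- basic data
  set A : Fin n → Fin q → Finset (Fin L) :=
    fun j c => Finset.univ.filter (fun i => k i j = c) with hA
  set S : Fin n → Fin q → (Fin L → ℝ) → ℝ := fun j c x => ∑ i ∈ A j c, x i with hS
  set Mx : (Fin L → ℝ) → Fin n → ℝ :=
    fun ω j => Finset.univ.sup' hqn (fun c => S j c ω) with hMx
  set Fv : (Fin L → ℝ) → ℝ := fun ω => (n : ℝ) - ∑ j, Mx ω j with hFv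
  have hlfS : ∀ (j : Fin n) (c c' : Fin q) (x : Fin L → ℝ),
      lfun (A j c, A j c') x = S j c x - S j c' x := by
    intro j c c' x; simp [lfun, hS]
  have hlfS0 : ∀ (j : Fin n) (c : Fin q) (x : Fin L → ℝ),
      lfun (A j c, (∅ : Finset (Fin L))) x = S j c x := by
    intro j c x; simp [lfun, hS]
  -- the value v
  set Vs : Set ℝ :=
    {r : ℝ | ∃ y : Fin n → Fin q → ℝ, (∀ j, IsDist (y j)) ∧ r = ⨆ i, dvec (xs i) y} with hVs
  set v : ℝ := sInf Vs with hvdef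
  set y₀ : Fin n → Fin q → ℝ := fun _ => phi q (Classical.arbitrary (Fin q)) with hy₀def
  have hy₀ : ∀ j, IsDist (y₀ j) := fun j => isDist_phi _
  have hdnn : ∀ (i : Fin L) (y : Fin n → Fin q → ℝ), 0 ≤ dvec (xs i) y := by
    intro i y; unfold dvec; positivity
  have hbdd : ∀ y : Fin n → Fin q → ℝ, BddAbove (Set.range fun i => dvec (xs i) y) :=
    fun y => Set.Finite.bddAbove (Set.finite_range _)
  have hVsne : Vs.Nonempty := ⟨_, y₀, hy₀, rfl⟩
  have hVsbdd : BddBelow Vs := by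
    refine ⟨0, ?_⟩
    rintro r ⟨y, hy, rfl⟩
    exact le_trans (hdnn (Classical.arbitrary (Fin L)) y) (le_ciSup (hbdd y) _)
  -- dvec formula
  have hdvec : ∀ (i : Fin L) (y : Fin n → Fin q → ℝ), (∀ j, IsDist (y j)) →
      dvec (xs i) y = ∑ j, (1 - y j (k i j)) := by
    intro i y hy
    have hterm : ∀ j : Fin n, ∑ c, |xs i j c - y j c| = 2 * (1 - y j (k i j)) := by
      intro j
      have hle1 : y j (k i j) ≤ 1 := by
        have h := Finset.single_le_sum (f := y j) (fun c _ => (hy j).1 c)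
          (Finset.mem_univ (k i j))
        rw [(hy j).2] at h; exact h
      rw [hk i j]
      have h1 : |phi q (k i j) (k i j) - y j (k i j)| = 1 - y j (k i j) := by
        rw [show phi q (k i j) (k i j) = 1 by simp [phi]]
        rw [abs_of_nonneg (by linarith)]
      have h2 : ∑ c ∈ Finset.univ.erase (k i j), |phi q (k i j) c - y j c|
          = ∑ c ∈ Finset.univ.erase (k i j), y j c := by
        refine Finset.sum_congr rfl fun c hc => ?_
        have hcne : c ≠ k i j := (Finset.mem_erase.mp hc).1
        rw [show phi q (k i j) c = 0 by simp [phi, hcne], zero_sub, abs_neg,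
          abs_of_nonneg ((hy j).1 c)]
      calc ∑ c, |phi q (k i j) c - y j c|
          = |phi q (k i j) (k i j) - y j (k i j)|
            + ∑ c ∈ Finset.univ.erase (k i j), |phi q (k i j) c - y j c| :=
            (Finset.add_sum_erase _ _ (Finset.mem_univ _)).symm
        _ = (1 - y j (k i j)) + (1 - y j (k i j)) := by
            rw [h1, h2, Finset.sum_erase_eq_sub (Finset.mem_univ _), (hy j).2]
        _ = 2 * (1 - y j (k i j)) := by ring
    unfold dvec
    rw [Finset.sum_congr rfl fun j _ => hterm j, Finset.mul_sum]
    exact Finset.sum_congr rfl fun j _ => by ring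
  -- weighted sum formula
  have hPsum : ∀ (ω : Fin L → ℝ) (y : Fin n → Fin q → ℝ), (∀ j, IsDist (y j)) →
      ∑ i, ω i * dvec (xs i) y = ∑ j, ((∑ i, ω i) - ∑ c, y j c * S j c ω) := by
    intro ω y hy
    have h1 : ∀ i : Fin L, ω i * dvec (xs i) y = ∑ j, (ω i - ω i * y j (k i j)) := by
      intro i
      rw [hdvec i y hy, Finset.mul_sum]
      exact Finset.sum_congr rfl fun j _ => by ring
    rw [Finset.sum_congr rfl fun i _ => h1 i, Finset.sum_comm]
    refine Finset.sum_congr rfl fun j _ => ?_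
    rw [Finset.sum_sub_distrib]
    congr 1
    have hfib := Finset.sum_fiberwise (Finset.univ : Finset (Fin L)) (fun i => k i j)
      (fun i => ω i * y j (k i j))
    rw [← hfib]
    refine Finset.sum_congr rfl fun c _ => ?_
    rw [hS]
    simp only []
    rw [Finset.mul_sum]
    refine Finset.sum_congr ?_ fun i hi => ?_
    · rw [hA]
    · have hic : k i j = c := by
        rw [hA] at hi
        exact (Finset.mem_filter.mp hi).2
      rw [hic]; ring
  -- lower bound: Fv ω ≤ weighted sum
  have hP1 : ∀ (ω : Fin L → ℝ), IsDist ω → ∀ (y : Fin n → Fin q → ℝ), (∀ j, IsDist (y j)) →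
      Fv ω ≤ ∑ i, ω i * dvec (xs i) y := by
    intro ω hω y hy
    rw [hPsum ω y hy]
    have hMle : ∀ (j : Fin n) (c : Fin q) (ω' : Fin L → ℝ), S j c ω' ≤ Mx ω' j :=
      fun j c ω' => Finset.le_sup' (fun c => S j c ω') (Finset.mem_univ c)
    have hj : ∀ j : Fin n, ∑ c, y j c * S j c ω ≤ Mx ω j := by
      intro j
      calc ∑ c, y j c * S j c ω ≤ ∑ c, y j c * Mx ω j := by
            refine Finset.sum_le_sum fun c _ => ?_
            exact mul_le_mul_of_nonneg_left (hMle j c ω) ((hy j).1 c)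
        _ = Mx ω j := by rw [← Finset.sum_mul, (hy j).2, one_mul]
    have h2 : ∑ j, (1 - Mx ω j) ≤ ∑ j, ((∑ i, ω i) - ∑ c, y j c * S j c ω) := by
      refine Finset.sum_le_sum fun j _ => ?_
      rw [hω.2]
      linarith [hj j]
    have h3 : ∑ j : Fin n, ((1:ℝ) - Mx ω j) = (n : ℝ) - ∑ j, Mx ω j := by
      rw [Finset.sum_sub_distrib]
      simp
    rw [hFv]
    simp only []
    linarith
  -- attainment for the weighted problem
  have hAtt : ∀ (ω : Fin L → ℝ), IsDist ω →
      ∃ y : Fin n → Fin q → ℝ, (∀ j, IsDist (y j)) ∧ ∑ i, ω i * dvec (xs i) y = Fv ω := by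
    intro ω hω
    choose cm hcmem hcm using fun j => Finset.exists_mem_eq_sup' hqn (fun c => S j c ω)
    refine ⟨fun j => phi q (cm j), fun j => isDist_phi _, ?_⟩
    rw [hPsum _ _ (fun j => isDist_phi _)]
    have hterm : ∀ j : Fin n, ∑ c, phi q (cm j) c * S j c ω = Mx ω j := by
      intro j
      have e1 : ∀ c : Fin q, phi q (cm j) c * S j c ω
          = if c = cm j then S j c ω else 0 := by
        intro c; simp only [phi]; split <;> simp
      rw [Finset.sum_congr rfl fun c _ => e1 c, Finset.sum_ite_eq' Finset.univ (cm j)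
        (fun c => S j c ω), if_pos (Finset.mem_univ _)]
      rw [hMx]
      exact (hcm j).symm
    rw [Finset.sum_congr rfl fun j _ => by rw [hterm j, hω.2]]
    rw [Finset.sum_sub_distrib, hFv]
    simp
  -- the exact value of the weighted sInf
  have hInf : ∀ (ω : Fin L → ℝ), IsDist ω →
      sInf {r : ℝ | ∃ y : Fin n → Fin q → ℝ, (∀ j, IsDist (y j)) ∧
        r = ∑ i, ω i * dvec (xs i) y} = Fv ω := by
    intro ω hω
    obtain ⟨ys, hys, hval⟩ := hAtt ω hω
    apply le_antisymm
    · refine csInf_le ⟨Fv ω, ?_⟩ ⟨ys, hys, hval.symm⟩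
      rintro r ⟨y, hy, rfl⟩
      exact hP1 ω hω y hy
    · refine le_csInf ⟨_, ys, hys, rfl⟩ ?_
      rintro r ⟨y, hy, rfl⟩
      exact hP1 ω hω y hy
  -- weak duality
  have hub : ∀ (ω : Fin L → ℝ), IsDist ω → Fv ω ≤ v := by
    intro ω hω
    rw [hvdef]
    refine le_csInf hVsne ?_
    rintro r ⟨y, hy, rfl⟩
    calc Fv ω ≤ ∑ i, ω i * dvec (xs i) y := hP1 ω hω y hy
      _ ≤ ∑ i, ω i * (⨆ i', dvec (xs i') y) := by
          refine Finset.sum_le_sum fun i _ => ?_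
          exact mul_le_mul_of_nonneg_left (le_ciSup (hbdd y) i) (hω.1 i)
      _ = ⨆ i', dvec (xs i') y := by rw [← Finset.sum_mul, hω.2, one_mul]
  -- strong duality via separation
  have hstrong : ∃ ω : Fin L → ℝ, IsDist ω ∧ v ≤ Fv ω := by
    have hLn : (Finset.univ : Finset (Fin L)).Nonempty := Finset.univ_nonempty
    set Cset : Set (Fin L → ℝ) :=
      {z | ∃ y : Fin n → Fin q → ℝ, (∀ j, IsDist (y j)) ∧ ∀ i, dvec (xs i) y ≤ z i} with hCset
    set sset : Set (Fin L → ℝ) := Set.univ.pi (fun _ => Set.Iio v) with hsset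
    have hmem_s : ∀ z : Fin L → ℝ, z ∈ sset ↔ ∀ i, z i < v := by
      intro z; rw [hsset, Set.mem_univ_pi]; simp
    have hsopen : IsOpen sset := isOpen_set_pi Set.finite_univ fun _ _ => isOpen_Iio
    have hsconv : Convex ℝ sset := convex_pi fun _ _ => convex_Iio v
    have hCconv : Convex ℝ Cset := by
      rintro z ⟨y, hy, hzy⟩ z' ⟨y', hy', hzy'⟩ a b ha hb hab
      have hyc : ∀ j, IsDist ((a • y + b • y') j) := by
        intro j
        constructor
        · intro c
          simp only [Pi.add_apply, Pi.smul_apply, smul_eq_mul]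
          exact add_nonneg (mul_nonneg ha ((hy j).1 c)) (mul_nonneg hb ((hy' j).1 c))
        · simp only [Pi.add_apply, Pi.smul_apply, smul_eq_mul]
          rw [Finset.sum_add_distrib, ← Finset.mul_sum, ← Finset.mul_sum, (hy j).2, (hy' j).2]
          simpa using hab
      refine ⟨a • y + b • y', hyc, fun i => ?_⟩
      rw [hdvec i _ hyc]
      have e1 : ∀ j : Fin n, (1 : ℝ) - (a • y + b • y') j (k i j)
          = a * (1 - y j (k i j)) + b * (1 - y' j (k i j)) := by
        intro j
        simp only [Pi.add_apply, Pi.smul_apply, smul_eq_mul]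
        have : a + b = 1 := hab
        ring_nf
        linarith
      rw [Finset.sum_congr rfl fun j _ => e1 j, Finset.sum_add_distrib, ← Finset.mul_sum,
        ← Finset.mul_sum, ← hdvec i y hy, ← hdvec i y' hy']
      exact add_le_add (mul_le_mul_of_nonneg_left (hzy i) ha)
        (mul_le_mul_of_nonneg_left (hzy' i) hb)
    have hdisj : Disjoint sset Cset := by
      rw [Set.disjoint_left]
      rintro z hzs ⟨y, hy, hzy⟩
      have hv_le : v ≤ ⨆ i, dvec (xs i) y := by
        rw [hvdef]
        exact csInf_le hVsbdd ⟨y, hy, rfl⟩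
      have h1 : (⨆ i, dvec (xs i) y) ≤ Finset.univ.sup' hLn z :=
        ciSup_le fun i => (hzy i).trans (Finset.le_sup' z (Finset.mem_univ i))
      have h2 : Finset.univ.sup' hLn z < v :=
        (Finset.sup'_lt_iff hLn).mpr fun i _ => (hmem_s z).mp hzs i
      linarith
    obtain ⟨f, u, hfs, hfC⟩ := geometric_hahn_banach_open hsconv hsopen hCconv hdisj
    set ω0 : Fin L → ℝ := fun i => f (fun j => if i = j then 1 else 0) with hω0
    have hf : ∀ z : Fin L → ℝ, f z = ∑ i, z i * ω0 i := by
      intro z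
      conv_lhs => rw [pi_eq_sum_univ z]
      rw [map_sum]
      refine Finset.sum_congr rfl fun i _ => ?_
      rw [map_smul, smul_eq_mul, hω0]
    set zb : Fin L → ℝ := fun i => dvec (xs i) y₀ with hzb
    have hzbC : zb ∈ Cset := ⟨y₀, hy₀, fun i => le_refl _⟩
    have hzbu : u ≤ f zb := hfC _ hzbC
    have hω0nn : ∀ i, 0 ≤ ω0 i := by
      intro i
      by_contra hneg
      push_neg at hneg
      set t : ℝ := (u - f zb) / ω0 i + 1 with htdef
      have hne : ω0 i ≠ 0 := ne_of_lt hneg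
      have ht0 : 0 ≤ t := by
        have h1 : u - f zb ≤ 0 := by linarith
        have h2 : 0 ≤ (u - f zb) / ω0 i := by
          rw [div_nonneg_iff]
          right
          exact ⟨h1, le_of_lt hneg⟩
        rw [htdef]; linarith
      have hztC : zb + t • (fun j => if i = j then (1:ℝ) else 0) ∈ Cset := by
        refine ⟨y₀, hy₀, fun i' => ?_⟩
        simp only [Pi.add_apply, Pi.smul_apply, smul_eq_mul]
        have h3 : 0 ≤ t * (if i = i' then (1:ℝ) else 0) := by
          split
          · linarith
          · simp
        have h4 : dvec (xs i') y₀ ≤ zb i' := le_of_eq rfl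
        linarith
      have h5 := hfC _ hztC
      rw [map_add, map_smul, smul_eq_mul] at h5
      have h6 : f (fun j => if i = j then (1:ℝ) else 0) = ω0 i := by rw [hω0]
      rw [h6] at h5
      have ht : t * ω0 i = (u - f zb) + ω0 i := by
        rw [htdef]
        field_simp
      linarith
    set σ : ℝ := ∑ i, ω0 i with hσ
    have hσnn : 0 ≤ σ := Finset.sum_nonneg fun i _ => hω0nn i
    have hσpos : 0 < σ := by
      rcases eq_or_lt_of_le hσnn with h0 | h
      swap
      · exact h
      exfalso
      have hall : ∀ i ∈ Finset.univ, ω0 i = 0 :=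
        (Finset.sum_eq_zero_iff_of_nonneg (fun i _ => hω0nn i)).mp h0.symm
      have hfz : ∀ z : Fin L → ℝ, f z = 0 := by
        intro z
        rw [hf z]
        exact Finset.sum_eq_zero fun i _ => by rw [hall i (Finset.mem_univ i), mul_zero]
      have h1 : f (fun _ => v - 1) < u := hfs _ ((hmem_s _).mpr fun i => by linarith)
      rw [hfz] at h1
      rw [hfz] at hzbu
      linarith
    have hvσ : v * σ ≤ u := by
      by_contra hlt
      push_neg at hlt
      set ε : ℝ := (v * σ - u) / σ with hε
      have hεpos : 0 < ε := div_pos (by linarith) hσpos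
      have h1 : f (fun _ => v - ε) < u := hfs _ ((hmem_s _).mpr fun i => by linarith)
      rw [hf] at h1
      have h2 : ∑ i, (v - ε) * ω0 i = (v - ε) * σ := by rw [← Finset.mul_sum]
      rw [h2] at h1
      have h3 : (v - ε) * σ = u := by
        rw [hε]
        field_simp
        ring
      linarith
    have hdist : IsDist (fun i => ω0 i / σ) := by
      constructor
      · exact fun i => div_nonneg (hω0nn i) hσnn
      · rw [← Finset.sum_div, ← hσ, div_self (ne_of_gt hσpos)]
    refine ⟨fun i => ω0 i / σ, hdist, ?_⟩
    rw [← hInf _ hdist]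
    refine le_csInf ⟨_, y₀, hy₀, rfl⟩ ?_
    rintro r ⟨y, hy, rfl⟩
    have hzyC : (fun i => dvec (xs i) y) ∈ Cset := ⟨y, hy, fun i => le_refl _⟩
    have h1 : u ≤ ∑ i, dvec (xs i) y * ω0 i := by
      have := hfC _ hzyC
      rwa [hf] at this
    have h2 : ∑ i, (ω0 i / σ) * dvec (xs i) y = (∑ i, dvec (xs i) y * ω0 i) / σ := by
      rw [Finset.sum_div]
      exact Finset.sum_congr rfl fun i _ => by ring
    rw [h2, le_div_iff₀ hσpos]
    linarith
  -- tight-set induction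
  set Tset : (Fin L → ℝ) → Finset (Finset (Fin L) × Finset (Fin L)) :=
    fun ω => Finset.univ.filter (fun p => lfun p ω = 0) with hTset
  have hmemT : ∀ (ω : Fin L → ℝ) p, p ∈ Tset ω ↔ lfun p ω = 0 := by
    intro ω p; simp [hTset]
  have main : ∀ m : ℕ, ∀ ω : Fin L → ℝ, IsDist ω → Fv ω = v → ((Tset ω)ᶜ).card ≤ m →
      ∃ ω', IsDist ω' ∧ Fv ω' = v ∧ SolSet (Tset ω') = {ω'} := by
    intro m
    induction m with
    | zero =>
      intro ω hω hFω hcard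
      exfalso
      have hTuniv : Tset ω = Finset.univ := by
        have h0 : (Tset ω)ᶜ = ∅ := Finset.card_eq_zero.mp (Nat.le_zero.mp hcard)
        rwa [Finset.compl_eq_empty_iff] at h0
      have hzero : ∀ i : Fin L, ω i = 0 := by
        intro i
        have hp : (({i}, (∅ : Finset (Fin L))) : Finset (Fin L) × Finset (Fin L)) ∈ Tset ω := by
          rw [hTuniv]; exact Finset.mem_univ _
        have h1 := (hmemT ω _).mp hp
        rwa [lfun_coord] at h1
      have h2 : (1:ℝ) = 0 := by
        rw [← hω.2]
        exact Finset.sum_eq_zero fun i _ => hzero i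
      norm_num at h2
    | succ m ih =>
      intro ω hω hFω hcard
      by_cases hsing : SolSet (Tset ω) = {ω}
      · exact ⟨ω, hω, hFω, hsing⟩
      have hωSol : ω ∈ SolSet (Tset ω) := ⟨hω.2, fun p hp => (hmemT ω p).mp hp⟩
      have hex2 : ∃ ω', ω' ∈ SolSet (Tset ω) ∧ ω' ≠ ω := by
        by_contra h
        push_neg at h
        exact hsing (Set.eq_singleton_iff_unique_mem.mpr ⟨hωSol, h⟩)
      obtain ⟨ω', hω'Sol, hω'ne⟩ := hex2
      set dir : Fin L → ℝ := ω' - ω with hdir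
      have hdir0 : dir ≠ 0 := sub_ne_zero.mpr hω'ne
      have hdirsum : ∑ i, dir i = 0 := by
        rw [hdir]
        simp only [Pi.sub_apply]
        rw [Finset.sum_sub_distrib, hω'Sol.1, hω.2, sub_self]
      have hdirT : ∀ p ∈ Tset ω, lfun p dir = 0 := by
        intro p hp
        rw [hdir, lfun_sub, hω'Sol.2 p hp, (hmemT ω p).mp hp, sub_zero]
      have hexneg : ∃ i, dir i < 0 := by
        by_contra h
        push_neg at h
        have hz : ∀ i ∈ Finset.univ, dir i = 0 :=
          (Finset.sum_eq_zero_iff_of_nonneg (fun i _ => h i)).mp hdirsum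
        exact hdir0 (funext fun i => hz i (Finset.mem_univ i))
      set B := Finset.univ.filter
        (fun p : Finset (Fin L) × Finset (Fin L) => lfun p ω ≠ 0 ∧ lfun p dir ≠ 0) with hB
      have hmemB : ∀ p, p ∈ B ↔ (lfun p ω ≠ 0 ∧ lfun p dir ≠ 0) := by
        intro p; simp [hB]
      have hcoordB : ∀ i : Fin L, dir i ≠ 0 →
          ((({i}, (∅ : Finset (Fin L))) : Finset (Fin L) × Finset (Fin L)) ∈ B ∧ 0 < ω i) := by
        intro i hi
        have h1 : lfun ({i}, ∅) dir ≠ 0 := by rwa [lfun_coord]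
        have h2 : lfun ({i}, ∅) ω ≠ 0 := by
          intro h0
          exact h1 (hdirT _ ((hmemT ω _).mpr h0))
        have h2' : ω i ≠ 0 := by rwa [lfun_coord] at h2
        have h3 : 0 < ω i := lt_of_le_of_ne (hω.1 i) (Ne.symm h2')
        exact ⟨(hmemB _).mpr ⟨h2, h1⟩, h3⟩
      have hBne : B.Nonempty := by
        obtain ⟨i, hi⟩ := hexneg
        exact ⟨_, (hcoordB i (ne_of_lt hi)).1⟩
      set Cn := B.filter (fun p => 0 < lfun p ω ∧ lfun p dir < 0) with hCn
      have hCnne : Cn.Nonempty := by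
        obtain ⟨i, hi⟩ := hexneg
        obtain ⟨hiB, hiω⟩ := hcoordB i (ne_of_lt hi)
        refine ⟨({i}, ∅), Finset.mem_filter.mpr ⟨hiB, ?_, ?_⟩⟩
        · rwa [lfun_coord]
        · rwa [lfun_coord]
      set ε := (B.image (fun p => |lfun p ω| / |lfun p dir|)).min' (hBne.image _) with hε
      have hεpos : 0 < ε := by
        obtain ⟨p, hpB, hpe⟩ := Finset.mem_image.mp ((B.image
          (fun p => |lfun p ω| / |lfun p dir|)).min'_mem (hBne.image _))
        rw [hε, ← hpe]
        have hp2 := (hmemB p).mp hpB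
        exact div_pos (abs_pos.mpr hp2.1) (abs_pos.mpr hp2.2)
      have hεle : ∀ p ∈ B, ε ≤ |lfun p ω| / |lfun p dir| := fun p hp =>
        Finset.min'_le _ _ (Finset.mem_image_of_mem _ hp)
      set ts := (Cn.image (fun p => -(lfun p ω) / lfun p dir)).min' (hCnne.image _) with hts
      obtain ⟨pst, hpst, hpst2⟩ := Finset.mem_image.mp ((Cn.image
        (fun p => -(lfun p ω) / lfun p dir)).min'_mem (hCnne.image _))
      have hpstf := Finset.mem_filter.mp hpst
      have hpst2' : -(lfun pst ω) / lfun pst dir = ts := by rw [hts]; exact hpst2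
      have htspos : 0 < ts := by
        rw [← hpst2']
        have h1 : -(lfun pst ω) < 0 := by linarith [hpstf.2.1]
        exact div_pos_of_neg_of_neg h1 hpstf.2.2
      have htsle : ∀ p ∈ Cn, ts ≤ -(lfun p ω) / lfun p dir := fun p hp =>
        Finset.min'_le _ _ (Finset.mem_image_of_mem _ hp)
      have key : ∀ p : Finset (Fin L) × Finset (Fin L), 0 ≤ lfun p ω →
          ∀ t : ℝ, -ε ≤ t → t ≤ ts → 0 ≤ lfun p (ω + t • dir) := by
        intro p hpω t ht1 ht2
        rw [lfun_add_smul]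
        rcases eq_or_ne (lfun p dir) 0 with hd0 | hd0
        · rw [hd0, mul_zero, add_zero]; exact hpω
        rcases eq_or_lt_of_le hpω with hpω0 | hpωpos
        · exact absurd (hdirT p ((hmemT ω p).mpr hpω0.symm)) hd0
        have hpB : p ∈ B := (hmemB p).mpr ⟨ne_of_gt hpωpos, hd0⟩
        rcases lt_or_gt_of_ne hd0 with hneg | hpos
        · have hpCn : p ∈ Cn := Finset.mem_filter.mpr ⟨hpB, hpωpos, hneg⟩
          have h1 : ts ≤ -(lfun p ω) / lfun p dir := htsle p hpCn
          have h2 : (-(lfun p ω) / lfun p dir) * lfun p dir = -(lfun p ω) :=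
            div_mul_cancel₀ _ hd0
          have h3 : (-(lfun p ω) / lfun p dir) * lfun p dir ≤ t * lfun p dir :=
            mul_le_mul_of_nonpos_right (le_trans ht2 h1) (le_of_lt hneg)
          rw [h2] at h3
          linarith
        · have h1 : ε ≤ |lfun p ω| / |lfun p dir| := hεle p hpB
          rw [abs_of_pos hpωpos, abs_of_pos hpos] at h1
          have h2 : (lfun p ω / lfun p dir) * lfun p dir = lfun p ω :=
            div_mul_cancel₀ _ (ne_of_gt hpos)
          have h3 : (-(lfun p ω / lfun p dir)) * lfun p dir ≤ t * lfun p dir :=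
            mul_le_mul_of_nonneg_right (by linarith) (le_of_lt hpos)
          rw [neg_mul, h2] at h3
          linarith
      have hdist_t : ∀ t : ℝ, -ε ≤ t → t ≤ ts → IsDist (ω + t • dir) := by
        intro t ht1 ht2
        constructor
        · intro i
          have h1 := key ({i}, ∅) (by rw [lfun_coord]; exact hω.1 i) t ht1 ht2
          rwa [lfun_coord] at h1
        · simp only [Pi.add_apply, Pi.smul_apply, smul_eq_mul]
          rw [Finset.sum_add_distrib, hω.2, ← Finset.mul_sum, hdirsum, mul_zero, add_zero]
      choose cm hcmem hcm using fun j => Finset.exists_mem_eq_sup' hqn (fun c => S j c ω)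
      have hSadd : ∀ (j : Fin n) (c : Fin q) (t : ℝ),
          S j c (ω + t • dir) = S j c ω + t * S j c dir := by
        intro j c t
        rw [hS]
        simp only [Pi.add_apply, Pi.smul_apply, smul_eq_mul]
        rw [Finset.sum_add_distrib, Finset.mul_sum]
      have hMxt : ∀ t : ℝ, -ε ≤ t → t ≤ ts → ∀ j : Fin n,
          Mx (ω + t • dir) j = S j (cm j) ω + t * S j (cm j) dir := by
        intro t ht1 ht2 j
        rw [hMx]
        apply le_antisymm
        · apply Finset.sup'_le
          intro c _
          have hp0 : 0 ≤ lfun (A j (cm j), A j c) ω := by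
            rw [hlfS]
            have h1 : S j c ω ≤ S j (cm j) ω := by
              rw [← hcm j]
              exact Finset.le_sup' (fun c => S j c ω) (Finset.mem_univ c)
            linarith
          have h2 := key _ hp0 t ht1 ht2
          rw [hlfS] at h2
          have h4 := hSadd j (cm j) t
          have h5 := hSadd j c t
          linarith
        · have h1 := Finset.le_sup' (fun c => S j c (ω + t • dir)) (Finset.mem_univ (cm j))
          have h4 := hSadd j (cm j) t
          linarith
      set csum := ∑ j, S j (cm j) dir with hcsum
      have hFωeq : (n : ℝ) - ∑ j, S j (cm j) ω = v := by
        have h1 : ∑ j, Mx ω j = ∑ j, S j (cm j) ω := by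
          refine Finset.sum_congr rfl fun j _ => ?_
          rw [hMx]
          exact hcm j
        rw [← h1]
        rw [hFv] at hFω
        exact hFω
      have hFt : ∀ t : ℝ, -ε ≤ t → t ≤ ts → Fv (ω + t • dir) = v - t * csum := by
        intro t ht1 ht2
        rw [hFv]
        simp only []
        rw [Finset.sum_congr rfl fun j _ => hMxt t ht1 ht2 j, Finset.sum_add_distrib,
          ← Finset.mul_sum, ← hcsum]
        linarith [hFωeq]
      have hcsum0 : csum = 0 := by
        have h1 : Fv (ω + ts • dir) ≤ v := hub _ (hdist_t ts (by linarith) (le_refl _))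
        have h2 : Fv (ω + (-ε) • dir) ≤ v := hub _ (hdist_t (-ε) (le_refl _) (by linarith))
        rw [hFt ts (by linarith) (le_refl _)] at h1
        rw [hFt (-ε) (le_refl _) (by linarith)] at h2
        rcases lt_trichotomy csum 0 with hc | hc | hc
        · have h3 : ts * csum < 0 := mul_neg_of_pos_of_neg htspos hc
          linarith
        · exact hc
        · have h3 : 0 < ε * csum := mul_pos hεpos hc
          linarith
      set ω₂ : Fin L → ℝ := ω + ts • dir with hω₂
      have hd2 : IsDist ω₂ := hdist_t ts (by linarith) (le_refl _)
      have hF2 : Fv ω₂ = v := by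
        rw [hω₂, hFt ts (by linarith) (le_refl _), hcsum0, mul_zero, sub_zero]
      have hTsub : Tset ω ⊆ Tset ω₂ := by
        intro p hp
        refine (hmemT _ p).mpr ?_
        rw [hω₂, lfun_add_smul, (hmemT ω p).mp hp, hdirT p hp, mul_zero, add_zero]
      have hpstmem : pst ∈ Tset ω₂ := by
        refine (hmemT _ _).mpr ?_
        rw [hω₂, lfun_add_smul, ← hpst2', div_mul_cancel₀ _ (ne_of_lt hpstf.2.2)]
        ring
      have hpstnot : pst ∉ Tset ω := by
        intro h
        have h1 := (hmemT ω pst).mp h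
        linarith [hpstf.2.1]
      have hss : Tset ω ⊂ Tset ω₂ := (Finset.ssubset_iff_of_subset hTsub).mpr
        ⟨pst, hpstmem, hpstnot⟩
      have hcard2 : ((Tset ω₂)ᶜ).card ≤ m := by
        have h1 := Finset.card_lt_card hss
        have h2 := Finset.card_le_univ (Tset ω₂)
        rw [Finset.card_compl] at hcard ⊢
        omega
      exact ih ω₂ hd2 hF2 hcard2
  -- assembly
  obtain ⟨ω₁, hω₁d, hω₁v⟩ := hstrong
  have hω₁eq : Fv ω₁ = v := le_antisymm (hub _ hω₁d) hω₁v
  obtain ⟨ωst, hωstd, hωstv, hωsts⟩ := main ((Tset ω₁)ᶜ).card ω₁ hω₁d hω₁eq (le_refl _)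
  have hΩmem : ωst ∈ Omeg L := by
    refine mem_Omeg.mpr ⟨⟨Tset ωst, ?_⟩, hωstd⟩
    have hex : ∃ w, SolSet (Tset ωst) = {w} := ⟨ωst, hωsts⟩
    rw [pick]
    rw [dif_pos hex]
    have hs := hex.choose_spec
    exact Set.singleton_eq_singleton_iff.mp (hs.symm.trans hωsts)
  have hrom : ∀ (ω : Fin L → ℝ), IsDist ω → radOmega ω xs = (1 / (n : ℝ)) * Fv ω := by
    intro ω hω
    unfold radOmega
    rw [hInf ω hω]
  have hrr : radRelax xs = (1 / (n : ℝ)) * v := by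
    unfold radRelax
    rw [← hVs, ← hvdef]
  constructor
  · exact ⟨ωst, hΩmem, by rw [hrom ωst hωstd, hωstv, hrr]⟩
  · rintro r ⟨ω, hωΩ, rfl⟩
    have hωd : IsDist ω := (mem_Omeg.mp hωΩ).2
    rw [hrom ω hωd, hrr]
    have hn0 : (0:ℝ) ≤ 1 / (n : ℝ) := by positivity
    exact mul_le_mul_of_nonneg_left (hub _ hωd) hn0
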